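/- Let k be a positive integer, R = ℚ[h_1,…,h_k] graded by assigning degree i to h_i, and I_k the (homogeneous) ideal of R generated by the k-rectangular Schur polynomials S_{(ℓ^{k+1−ℓ})} for ℓ = 1,…,k. Then for every d ≥ 0, the ℚ-dimension of the degree-d homogeneous component of R/I_k equals the coefficient of q^d in the polynomial ∏_{i=1}^{k−1} (1 + q^i + q^{2i} + ⋯ + q^{(k−i)i}). -/

import Mathlib

open MvPolynomial

/-- A partition: a weakly decreasing list of positive integers
(parts listed from largest to smallest). -/
def IsPartitionList (l : List ℕ) : Prop :=
  l.Pairwise (· ≥ ·) ∧ ∀ x ∈ l, 0 < x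

/-- A `k`-bounded partition: a partition all of whose parts are at most `k`. -/
def IsKBoundedPartition (k : ℕ) (l : List ℕ) : Prop :=
  IsPartitionList l ∧ ∀ x ∈ l, x ≤ k

/-- A `k`-bounded partition is `k`-irreducible if, for each `j = 1, …, k`, it has
at most `k - j` parts equal to `j` (in particular no part equal to `k`). -/
def IsKIrreducible (k : ℕ) (l : List ℕ) : Prop :=
  IsKBoundedPartition k l ∧ ∀ j, 1 ≤ j → j ≤ k → l.count j ≤ k - j

/-- The generator `h_m` of `R = ℚ[h_1, …, h_k]` (realized as the polynomial ring
in the `k` indeterminates `X 0 = h_1, …, X (k-1) = h_k`), with the conventions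
`h_0 = 1` and `h_m = 0` for `m < 0` or `m > k`. -/
noncomputable def hElem (k : ℕ) (m : ℤ) : MvPolynomial (Fin k) ℚ :=
  if hm : 1 ≤ m ∧ m ≤ (k : ℤ) then X ⟨m.toNat - 1, by omega⟩
  else if m = 0 then 1 else 0

/-- The `k`-rectangular Schur polynomial `S_{(ℓ^{k+1-ℓ})}`, given by the
Jacobi–Trudi determinant `det (h_{ℓ - i + j})_{1 ≤ i, j ≤ k+1-ℓ}`. -/
noncomputable def rectSchur (k ℓ : ℕ) : MvPolynomial (Fin k) ℚ :=
  (Matrix.of fun i j : Fin (k + 1 - ℓ) =>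
    hElem k ((ℓ : ℤ) - (((i : ℕ) : ℤ) + 1) + (((j : ℕ) : ℤ) + 1))).det

/-- The ideal `I_k` of `R = ℚ[h_1, …, h_k]` generated by the `k`-rectangular
Schur polynomials `S_{(ℓ^{k+1-ℓ})}`, `ℓ = 1, …, k`. -/
noncomputable def rectIdeal (k : ℕ) : Ideal (MvPolynomial (Fin k) ℚ) :=
  Ideal.span (rectSchur k '' Set.Icc 1 k)

/-- For a `k`-bounded partition `λ = (λ_1, …, λ_n)`, the product
`h_λ = h_{λ_1} ⋯ h_{λ_n}`. -/
noncomputable def hProd (k : ℕ) (l : List ℕ) : MvPolynomial (Fin k) ℚ :=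
  (l.map fun m => hElem k (m : ℤ)).prod

/-- The polynomial `∏_{i=1}^{k-1} (1 + q^i + q^{2i} + ⋯ + q^{(k-i)i})`. -/
noncomputable def rankGenPoly (k : ℕ) : Polynomial ℕ :=
  ∏ i ∈ Finset.Icc 1 (k - 1),
    ∑ j ∈ Finset.range (k - i + 1), (Polynomial.X : Polynomial ℕ) ^ (j * i)

namespace HSQ

set_option synthInstance.maxHeartbeats 400000
set_option maxHeartbeats 1000000

variable (k : ℕ)

abbrev Rk := MvPolynomial (Fin k) ℚ

/-- the weight function -/
def wf : Fin k → ℕ := fun i => (i : ℕ) + 1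

/-- monomial with plain-function exponent vector -/
noncomputable def mono (a : Fin k → ℕ) : Rk k :=
  monomial (Finsupp.equivFunOnFinite.symm a) 1

def wt (a : Fin k → ℕ) : ℕ := ∑ i, a i * ((i : ℕ) + 1)

lemma wt_add (a b : Fin k → ℕ) : wt k (a + b) = wt k a + wt k b := by
  simp [wt, add_mul, Finset.sum_add_distrib]

lemma fsOf_add (a b : Fin k → ℕ) :
    Finsupp.equivFunOnFinite.symm (a + b)
      = Finsupp.equivFunOnFinite.symm a + Finsupp.equivFunOnFinite.symm b := by
  ext i; simp

lemma mono_mul (a b : Fin k → ℕ) : mono k a * mono k b = mono k (a + b) := by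
  simp [mono, monomial_mul, fsOf_add]

lemma fsOf_zero : (Finsupp.equivFunOnFinite.symm (0 : Fin k → ℕ)) = 0 := by
  ext i; simp

lemma mono_zero : mono k 0 = 1 := by
  simp [mono, fsOf_zero]

def sing (i : Fin k) (n : ℕ) : Fin k → ℕ := fun j => if j = i then n else 0

lemma mono_sing (i : Fin k) (n : ℕ) : mono k (sing k i n) = X i ^ n := by
  have h : Finsupp.equivFunOnFinite.symm (sing k i n) = Finsupp.single i n := by
    ext j
    simp [sing, Finsupp.single_apply, eq_comm]
  rw [mono, h, X_pow_eq_monomial]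

lemma weight_fsOf (a : Fin k → ℕ) :
    Finsupp.weight (wf k) (Finsupp.equivFunOnFinite.symm a) = wt k a := by
  rw [Finsupp.weight_apply, Finsupp.sum_fintype]
  · simp [wf, wt, smul_eq_mul]
  · intro i; simp

lemma mono_homog (a : Fin k → ℕ) :
    IsWeightedHomogeneous (wf k) (mono k a) (wt k a) := by
  apply isWeightedHomogeneous_monomial
  exact weight_fsOf k a

lemma wt_zero : wt k 0 = 0 := by simp [wt]

lemma wt_sum {ι : Type*} (s : Finset ι) (c : ι → Fin k → ℕ) :
    wt k (∑ x ∈ s, c x) = ∑ x ∈ s, wt k (c x) := by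
  classical
  induction s using Finset.induction with
  | empty => simp [wt_zero]
  | insert _ _ hx ih => simp [Finset.sum_insert hx, wt_add, ih]

lemma mono_prod {ι : Type*} (s : Finset ι) (c : ι → Fin k → ℕ) :
    ∏ x ∈ s, mono k (c x) = mono k (∑ x ∈ s, c x) := by
  classical
  induction s using Finset.induction with
  | empty => simp [mono_zero]
  | insert _ _ hx ih => simp [Finset.sum_insert hx, Finset.prod_insert hx, ih, mono_mul]

lemma wt_sing (i : Fin k) (n : ℕ) : wt k (sing k i n) = n * ((i : ℕ) + 1) := by
  simp [wt, sing, ite_mul]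

lemma hElem_zero {m : ℤ} (h : m < 0 ∨ (k : ℤ) < m) : hElem k m = 0 := by
  unfold hElem
  rw [dif_neg (by omega), if_neg (by omega)]

lemma hElem_good {m : ℤ} (h0 : 0 ≤ m) (hk : m ≤ (k : ℤ)) :
    ∃ a : Fin k → ℕ, hElem k m = mono k a ∧ wt k a = m.toNat ∧
      ∀ j : Fin k, a j ≠ 0 ↔ ((j : ℕ) : ℤ) + 1 = m := by
  rcases eq_or_lt_of_le h0 with h | h
  · refine ⟨0, ?_, by simp [wt_zero, ← h], ?_⟩
    · unfold hElem
      rw [dif_neg (by omega), if_pos (by omega), mono_zero]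
    · intro j
      simp only [Pi.zero_apply, ne_eq, not_true_eq_false, false_iff]
      omega
  · have hm1 : (1 : ℤ) ≤ m := h
    refine ⟨sing k ⟨m.toNat - 1, by omega⟩ 1, ?_, ?_, ?_⟩
    · unfold hElem
      rw [dif_pos ⟨hm1, hk⟩, mono_sing, pow_one]
    · rw [wt_sing]; simp; omega
    · intro j
      simp only [sing, ne_eq, ite_eq_right_iff, not_forall]
      constructor
      · rintro ⟨hj, -⟩
        rw [Fin.ext_iff] at hj
        simp at hj
        omega
      · intro hj
        refine ⟨?_, one_ne_zero⟩
        rw [Fin.ext_iff]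
        simp
        omega

def dT (i : Fin k) : ℕ := ((i : ℕ) + 1) * (k - (i : ℕ))

def rectv (i : Fin k) : Fin k → ℕ := sing k i (k - (i : ℕ))

noncomputable def Tg (i : Fin k) : Rk k := rectSchur k ((i : ℕ) + 1)

def Corr (i : Fin k) : Set (Rk k) :=
  {p | ∃ c : Fin k → ℕ, wt k c = dT k i ∧ (∃ j : Fin k, (i : ℕ) < (j : ℕ) ∧ c j ≠ 0) ∧
    p = mono k c}

lemma Tg_decomp (i : Fin k) :
    Tg k i - mono k (rectv k i) ∈ Submodule.span ℚ (Corr k i) := by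
  classical
  have hik : (i : ℕ) < k := i.isLt
  set ℓ : ℕ := (i : ℕ) + 1 with hℓ
  have hcard : (Finset.univ : Finset (Fin (k + 1 - ℓ))).card = k - (i : ℕ) := by
    simp only [Finset.card_univ, Fintype.card_fin]; omega
  rw [Tg, rectSchur, Matrix.det_apply]
  rw [← Finset.add_sum_erase Finset.univ _ (Finset.mem_univ (1 : Equiv.Perm (Fin (k + 1 - ℓ))))]
  have hid : (Equiv.Perm.sign (1 : Equiv.Perm (Fin (k + 1 - ℓ)))) •
      (∏ x : Fin (k + 1 - ℓ), (Matrix.of fun i' j' : Fin (k + 1 - ℓ) =>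
        hElem k ((ℓ : ℤ) - (((i' : ℕ) : ℤ) + 1) + (((j' : ℕ) : ℤ) + 1)))
          ((1 : Equiv.Perm (Fin (k + 1 - ℓ))) x) x) = mono k (rectv k i) := by
    rw [map_one, one_smul]
    have h1 : ∀ x : Fin (k + 1 - ℓ),
        (Matrix.of fun i' j' : Fin (k + 1 - ℓ) =>
          hElem k ((ℓ : ℤ) - (((i' : ℕ) : ℤ) + 1) + (((j' : ℕ) : ℤ) + 1)))
            ((1 : Equiv.Perm (Fin (k + 1 - ℓ))) x) x = X i := by
      intro x
      simp only [Matrix.of_apply, Equiv.Perm.one_apply]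
      have harg : (ℓ : ℤ) - (((x : ℕ) : ℤ) + 1) + (((x : ℕ) : ℤ) + 1) = (ℓ : ℤ) := by ring
      rw [harg]
      unfold hElem
      rw [dif_pos ⟨by omega, by omega⟩]
      congr 1
    rw [Finset.prod_congr rfl (fun x _ => h1 x), Finset.prod_const, hcard,
      rectv, ← mono_sing]
  rw [hid]
  rw [add_sub_cancel_left]
  apply Submodule.sum_mem
  intro σ hσ
  have hσne : σ ≠ 1 := (Finset.mem_erase.mp hσ).1
  rw [Units.smul_def]
  apply zsmul_mem
  -- the product term
  have hcard' : (Finset.univ : Finset (Fin (k + 1 - ℓ))).card = k + 1 - ℓ := by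
    simp only [Finset.card_univ, Fintype.card_fin]
  set mi : Fin (k + 1 - ℓ) → ℤ :=
    fun x => (ℓ : ℤ) - (((σ x : ℕ) : ℤ) + 1) + (((x : ℕ) : ℤ) + 1) with hmi
  have hterm : (∏ x : Fin (k + 1 - ℓ), (Matrix.of fun i' j' : Fin (k + 1 - ℓ) =>
      hElem k ((ℓ : ℤ) - (((i' : ℕ) : ℤ) + 1) + (((j' : ℕ) : ℤ) + 1))) (σ x) x)
      = ∏ x : Fin (k + 1 - ℓ), hElem k (mi x) := rfl
  rw [hterm]
  by_cases hgood : ∀ x, 0 ≤ mi x ∧ mi x ≤ (k : ℤ)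
  · choose a ha hwt hsupp using fun x => hElem_good k (hgood x).1 (hgood x).2
    rw [Finset.prod_congr rfl (fun x _ => ha x), mono_prod]
    -- sum of mi equals (k+1-ℓ) * ℓ
    have hsum : ∑ x : Fin (k + 1 - ℓ), mi x = ((k + 1 - ℓ : ℕ) : ℤ) * (ℓ : ℤ) := by
      have hperm : ∑ x : Fin (k + 1 - ℓ), (((σ x : ℕ) : ℤ) + 1)
          = ∑ x : Fin (k + 1 - ℓ), (((x : ℕ) : ℤ) + 1) :=
        Equiv.sum_comp σ (fun x => (((x : ℕ) : ℤ) + 1))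
      simp only [hmi]
      rw [Finset.sum_add_distrib, Finset.sum_sub_distrib, hperm, sub_add_cancel,
        Finset.sum_const, hcard', nsmul_eq_mul]
    have hwtsum : wt k (∑ x, a x) = dT k i := by
      have hn : k + 1 - ℓ = k - (i : ℕ) := by omega
      have h2 : ((∑ x, (mi x).toNat : ℕ) : ℤ) = ((dT k i : ℕ) : ℤ) := by
        rw [Nat.cast_sum]
        rw [Finset.sum_congr rfl (fun x _ => Int.toNat_of_nonneg (hgood x).1), hsum, hn, dT]
        push_cast [hℓ]
        ring
      rw [wt_sum, Finset.sum_congr rfl (fun x _ => hwt x)]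
      exact_mod_cast h2
    have hex : ∃ x, (ℓ : ℤ) < mi x := by
      by_contra hall
      push_neg at hall
      have hz : ∑ x : Fin (k + 1 - ℓ), ((ℓ : ℤ) - mi x) = 0 := by
        rw [Finset.sum_sub_distrib, hsum, Finset.sum_const, hcard', nsmul_eq_mul]
        ring
      have hcoords := (Finset.sum_eq_zero_iff_of_nonneg
        (fun x _ => by linarith [hall x])).mp hz
      apply hσne
      ext x
      have h3 := hcoords x (Finset.mem_univ x)
      simp only [hmi] at h3
      have hx : (σ x : ℕ) = (x : ℕ) := by omega
      simp [Fin.ext_iff, hx]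
    obtain ⟨x₀, hx₀⟩ := hex
    have hx₀k : mi x₀ ≤ (k : ℤ) := (hgood x₀).2
    have hj₀lt : (mi x₀).toNat - 1 < k := by omega
    set j₀ : Fin k := ⟨(mi x₀).toNat - 1, hj₀lt⟩ with hj₀
    have haj : a x₀ j₀ ≠ 0 := by
      rw [hsupp x₀ j₀]
      show (((mi x₀).toNat - 1 : ℕ) : ℤ) + 1 = mi x₀
      omega
    apply Submodule.subset_span
    refine ⟨∑ x, a x, hwtsum, ⟨j₀, ?_, ?_⟩, rfl⟩
    · show (i : ℕ) < (mi x₀).toNat - 1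
      omega
    · intro hzero
      rw [Finset.sum_apply] at hzero
      exact haj ((Finset.sum_eq_zero_iff.mp hzero) x₀ (Finset.mem_univ x₀))
  · push_neg at hgood
    obtain ⟨x, hx⟩ := hgood
    have : hElem k (mi x) = 0 := by
      rcases lt_or_ge (mi x) 0 with h | h
      · exact hElem_zero k (Or.inl h)
      · exact hElem_zero k (Or.inr (by omega))
    rw [Finset.prod_eq_zero (Finset.mem_univ x) this]
    exact Submodule.zero_mem _


lemma corr_le_homog (i : Fin k) :
    Submodule.span ℚ (Corr k i) ≤ weightedHomogeneousSubmodule ℚ (wf k) (dT k i) := by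
  rw [Submodule.span_le]
  rintro p ⟨c, hwtc, -, rfl⟩
  rw [SetLike.mem_coe, mem_weightedHomogeneousSubmodule, ← hwtc]
  exact mono_homog k c

lemma wt_rectv (i : Fin k) : wt k (rectv k i) = dT k i := by
  rw [rectv, wt_sing, dT]; ring

lemma Tg_homog (i : Fin k) : IsWeightedHomogeneous (wf k) (Tg k i) (dT k i) := by
  have h1 : mono k (rectv k i) ∈ weightedHomogeneousSubmodule ℚ (wf k) (dT k i) := by
    rw [mem_weightedHomogeneousSubmodule, ← wt_rectv k i]
    exact mono_homog k _
  have h2 := corr_le_homog k i (Tg_decomp k i)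
  have h3 := (weightedHomogeneousSubmodule ℚ (wf k) (dT k i)).add_mem h1 h2
  rw [add_sub_cancel] at h3
  exact h3

lemma homog_pow {p : Rk k} {m : ℕ} (hp : IsWeightedHomogeneous (wf k) p m) (n : ℕ) :
    IsWeightedHomogeneous (wf k) (p ^ n) (n * m) := by
  induction n with
  | zero => simpa using isWeightedHomogeneous_one ℚ (wf k)
  | succ n ih =>
    rw [pow_succ, Nat.succ_mul]
    exact ih.mul hp

noncomputable def Psi (a : Fin k → ℕ) : Rk k :=
  mono k (fun i => a i % (k - (i : ℕ))) * ∏ i, Tg k i ^ (a i / (k - (i : ℕ)))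

lemma Psi_homog (a : Fin k → ℕ) : IsWeightedHomogeneous (wf k) (Psi k a) (wt k a) := by
  have h1 : IsWeightedHomogeneous (wf k) (∏ i, Tg k i ^ (a i / (k - (i : ℕ))))
      (∑ i, (a i / (k - (i : ℕ))) * dT k i) :=
    IsWeightedHomogeneous.prod Finset.univ _ _ (fun i _ => homog_pow k (Tg_homog k i) _)
  have h2 := (mono_homog k (fun i => a i % (k - (i : ℕ)))).mul h1
  have h3 : wt k (fun i => a i % (k - (i : ℕ))) + ∑ i, (a i / (k - (i : ℕ))) * dT k i
      = wt k a := by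
    rw [wt, ← Finset.sum_add_distrib, wt]
    refine Finset.sum_congr rfl (fun i _ => ?_)
    rw [dT]
    conv_rhs => rw [← Nat.div_add_mod (a i) (k - (i : ℕ))]
    ring
  rw [h3] at h2
  exact h2

lemma Psi_irr {a : Fin k → ℕ} (h : ∀ i : Fin k, a i < k - (i : ℕ)) :
    Psi k a = mono k a := by
  rw [Psi]
  have h1 : (fun i : Fin k => a i % (k - (i : ℕ))) = a :=
    funext fun i => Nat.mod_eq_of_lt (h i)
  have h2 : ∀ i : Fin k, a i / (k - (i : ℕ)) = 0 :=
    fun i => Nat.div_eq_of_lt (h i)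
  simp [h1, h2]

lemma Psi_mulT (a : Fin k → ℕ) (i : Fin k) :
    Psi k a * Tg k i = Psi k (a + rectv k i) := by
  have hki : 0 < k - (i : ℕ) := by have := i.isLt; omega
  have hmod : (fun j : Fin k => (a + rectv k i) j % (k - (j : ℕ)))
      = fun j : Fin k => a j % (k - (j : ℕ)) := by
    funext j
    by_cases hj : j = i
    · subst hj
      simp [rectv, sing, Nat.add_mod_right]
    · simp [rectv, sing, hj]
  have hdiv : ∀ j : Fin k, (a + rectv k i) j / (k - (j : ℕ))
      = a j / (k - (j : ℕ)) + if j = i then 1 else 0 := by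
    intro j
    by_cases hj : j = i
    · subst hj
      simp [rectv, sing, Nat.add_div_right _ hki]
    · simp [rectv, sing, hj]
  rw [Psi, Psi, hmod]
  have hprod : ∏ j, Tg k j ^ ((a + rectv k i) j / (k - (j : ℕ)))
      = (∏ j, Tg k j ^ (a j / (k - (j : ℕ)))) * Tg k i := by
    rw [Finset.prod_congr rfl (fun j _ => by rw [hdiv j, pow_add]),
      Finset.prod_mul_distrib]
    congr 1
    rw [Finset.prod_eq_single i (fun j _ hj => by simp [hj]) (by simp)]
    simp
  rw [hprod, mul_assoc]


def PsiSet (d : ℕ) : Set (Rk k) := Psi k '' {a | wt k a = d}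

noncomputable def Md (d : ℕ) : Submodule ℚ (Rk k) := Submodule.span ℚ (PsiSet k d)

lemma Md_mulT {e : ℕ} (i : Fin k) {p : Rk k} (hp : p ∈ Md k e) :
    p * Tg k i ∈ Md k (e + dT k i) := by
  induction hp using Submodule.span_induction with
  | mem x hx =>
    obtain ⟨a, ha, rfl⟩ := hx
    rw [Psi_mulT]
    exact Submodule.subset_span ⟨a + rectv k i, by rw [Set.mem_setOf_eq, wt_add, wt_rectv, ha], rfl⟩
  | zero => simp
  | add x y _ _ hx hy => rw [add_mul]; exact Submodule.add_mem _ hx hy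
  | smul r x _ hx => rw [smul_mul_assoc]; exact Submodule.smul_mem _ _ hx

def mu (d : ℕ) (a : Fin k → ℕ) : ℕ := ∑ j, a j * (d + 1) ^ (j : ℕ)

lemma mu_add (d : ℕ) (a b : Fin k → ℕ) : mu k d (a + b) = mu k d a + mu k d b := by
  simp [mu, add_mul, Finset.sum_add_distrib]

lemma mu_sing (d : ℕ) (i : Fin k) (n : ℕ) :
    mu k d (sing k i n) = n * (d + 1) ^ (i : ℕ) := by
  simp [mu, sing, ite_mul]

lemma mu_le {d : ℕ} {a : Fin k → ℕ} (h : wt k a = d) :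
    mu k d a ≤ k * ((d + 1) ^ k * d) := by
  have hbd : ∀ j : Fin k, a j ≤ d := by
    intro j
    have h1 : a j * ((j : ℕ) + 1) ≤ wt k a :=
      Finset.single_le_sum (f := fun j : Fin k => a j * ((j : ℕ) + 1))
        (fun _ _ => Nat.zero_le _) (Finset.mem_univ j)
    rw [h] at h1
    calc a j = a j * 1 := (mul_one _).symm
    _ ≤ a j * ((j : ℕ) + 1) := Nat.mul_le_mul_left _ (by omega)
    _ ≤ d := h1
  have hterm : ∀ j : Fin k, a j * (d + 1) ^ (j : ℕ) ≤ (d + 1) ^ k * d := by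
    intro j
    calc a j * (d + 1) ^ (j : ℕ) ≤ d * (d + 1) ^ (j : ℕ) :=
        Nat.mul_le_mul_right _ (hbd j)
    _ ≤ d * (d + 1) ^ k := Nat.mul_le_mul_left _ (Nat.pow_le_pow_right (by omega) (le_of_lt j.isLt))
    _ = (d + 1) ^ k * d := mul_comm _ _
  calc mu k d a ≤ ∑ _j : Fin k, (d + 1) ^ k * d :=
      Finset.sum_le_sum (fun j _ => hterm j)
  _ = k * ((d + 1) ^ k * d) := by simp [Finset.sum_const, mul_comm]

lemma mu_key {d : ℕ} {a' c : Fin k → ℕ} {i j₀ : Fin k}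
    (hd : wt k (a' + rectv k i) = d) (hj : (i : ℕ) < (j₀ : ℕ)) (hc : c j₀ ≠ 0) :
    mu k d (a' + rectv k i) < mu k d (a' + c) := by
  have hik : (i : ℕ) < k := i.isLt
  have h4 : k - (i : ℕ) ≤ d := by
    rw [wt_add, wt_rectv, dT] at hd
    have : k - (i : ℕ) ≤ ((i : ℕ) + 1) * (k - (i : ℕ)) := Nat.le_mul_of_pos_left _ (by omega)
    omega
  have h3 : (d + 1) ^ ((j₀ : ℕ)) ≤ mu k d c := by
    have := Finset.single_le_sum (f := fun j : Fin k => c j * (d + 1) ^ (j : ℕ))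
      (fun _ _ => Nat.zero_le _) (Finset.mem_univ j₀)
    have h5 : (d + 1) ^ (j₀ : ℕ) ≤ c j₀ * (d + 1) ^ (j₀ : ℕ) :=
      Nat.le_mul_of_pos_left _ (by omega)
    exact le_trans h5 this
  have h2 : (d + 1) ^ ((i : ℕ) + 1) ≤ (d + 1) ^ (j₀ : ℕ) :=
    Nat.pow_le_pow_right (by omega) (by omega)
  have h1 : (k - (i : ℕ)) * (d + 1) ^ (i : ℕ) < (d + 1) ^ ((i : ℕ) + 1) := by
    rw [pow_succ]
    rw [mul_comm ((d + 1) ^ (i : ℕ)) (d + 1)]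
    exact Nat.mul_lt_mul_of_lt_of_le (by omega) (le_refl _) (Nat.pow_pos (by omega))
  rw [mu_add, mu_add, rectv, mu_sing]
  omega

lemma mono_mem_Md : ∀ d : ℕ, ∀ a : Fin k → ℕ, wt k a = d → mono k a ∈ Md k d := by
  intro d
  induction d using Nat.strong_induction_on with
  | _ d IHd =>
  set B := k * ((d + 1) ^ k * d) with hB
  suffices H : ∀ t : ℕ, ∀ a : Fin k → ℕ, wt k a = d → B + 1 - mu k d a ≤ t →
      mono k a ∈ Md k d by
    intro a ha
    exact H (B + 1) a ha (by omega)
  intro t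
  induction t with
  | zero =>
    intro a ha hf
    have := mu_le k ha
    omega
  | succ t IHt =>
    intro a hwta hfuel
    by_cases hirr : ∀ i : Fin k, a i < k - (i : ℕ)
    · rw [← Psi_irr k hirr]
      exact Submodule.subset_span ⟨a, hwta, rfl⟩
    · push_neg at hirr
      obtain ⟨i, hi⟩ := hirr
      have hik : (i : ℕ) < k := i.isLt
      set a' : Fin k → ℕ := fun j => if j = i then a j - (k - (i : ℕ)) else a j with ha'
      have ha : a = a' + rectv k i := by
        funext j
        by_cases hj : j = i
        · subst hj; simp [ha', rectv, sing]; omega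
        · simp [ha', rectv, sing, hj]
      have hdT_le : dT k i ≤ d := by
        rw [ha, wt_add, wt_rectv] at hwta
        omega
      have hwa' : wt k a' = d - dT k i := by
        rw [ha, wt_add, wt_rectv] at hwta
        omega
      have hkey : mono k a = mono k a' * Tg k i -
          mono k a' * (Tg k i - mono k (rectv k i)) := by
        rw [mul_sub, sub_sub_cancel, mono_mul, ← ha]
      rw [hkey]
      apply Submodule.sub_mem
      · have hdTpos : 0 < dT k i := Nat.mul_pos (by omega) (by omega)
        have h1 := IHd (d - dT k i) (by omega) a' hwa'
        have h2 := Md_mulT k i h1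
        rwa [Nat.sub_add_cancel hdT_le] at h2
      · -- mono a' * (correction) ∈ Md d
        suffices hgen : ∀ p ∈ Submodule.span ℚ (Corr k i), mono k a' * p ∈ Md k d by
          exact hgen _ (Tg_decomp k i)
        intro p hp
        induction hp using Submodule.span_induction with
        | mem x hx =>
          obtain ⟨c, hwtc, ⟨j₀, hj₀, hcj₀⟩, rfl⟩ := hx
          rw [mono_mul]
          have hwtac : wt k (a' + c) = d := by
            rw [wt_add, hwa', hwtc]
            omega
          apply IHt (a' + c) hwtac
          have hlt : mu k d a < mu k d (a' + c) := by
            rw [ha]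
            exact mu_key k (by rw [← ha]; exact hwta) hj₀ hcj₀
          have hle1 := mu_le k hwta
          have hle2 := mu_le k hwtac
          omega
        | zero => simp
        | add x y _ _ hx hy => rw [mul_add]; exact Submodule.add_mem _ hx hy
        | smul r x _ hx => rw [mul_smul_comm]; exact Submodule.smul_mem _ _ hx


lemma Md_le_W (d : ℕ) : Md k d ≤ weightedHomogeneousSubmodule ℚ (wf k) d := by
  rw [Md, Submodule.span_le]
  rintro p ⟨a, ha, rfl⟩
  rw [SetLike.mem_coe, mem_weightedHomogeneousSubmodule, ← ha]
  exact Psi_homog k a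

lemma W_le_Md (d : ℕ) : weightedHomogeneousSubmodule ℚ (wf k) d ≤ Md k d := by
  intro f hf
  rw [MvPolynomial.as_sum f]
  apply Submodule.sum_mem
  intro v hv
  have hwtv : wt k (⇑v) = d := by
    have h1 : Finsupp.weight (wf k) v = d := hf (mem_support_iff.mp hv)
    rw [← Finsupp.equivFunOnFinite_symm_coe v, weight_fsOf] at h1
    exact h1
  have hmono : mono k (⇑v) = monomial v 1 := by
    rw [mono, Finsupp.equivFunOnFinite_symm_coe]
  have h2 : monomial v (coeff v f) = (coeff v f) • mono k (⇑v) := by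
    rw [hmono, smul_monomial, smul_eq_mul, mul_one]
  rw [h2]
  exact Submodule.smul_mem _ _ (mono_mem_Md k d (⇑v) hwtv)

def PsiRed (d : ℕ) : Set (Rk k) :=
  Psi k '' {a | wt k a = d ∧ ∃ i : Fin k, k - (i : ℕ) ≤ a i}

noncomputable def M'd (d : ℕ) : Submodule ℚ (Rk k) := Submodule.span ℚ (PsiRed k d)

lemma M'd_le_W (d : ℕ) : M'd k d ≤ weightedHomogeneousSubmodule ℚ (wf k) d := by
  rw [M'd, Submodule.span_le]
  rintro p ⟨a, ⟨ha, -⟩, rfl⟩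
  rw [SetLike.mem_coe, mem_weightedHomogeneousSubmodule, ← ha]
  exact Psi_homog k a

lemma Md_mulT_red {e : ℕ} (i : Fin k) {p : Rk k} (hp : p ∈ Md k e) :
    p * Tg k i ∈ M'd k (e + dT k i) := by
  induction hp using Submodule.span_induction with
  | mem x hx =>
    obtain ⟨a, ha, rfl⟩ := hx
    rw [Psi_mulT]
    refine Submodule.subset_span ⟨a + rectv k i, ⟨by rw [wt_add, wt_rectv, ha], ⟨i, ?_⟩⟩, rfl⟩
    simp [rectv, sing]
  | zero => simp
  | add x y _ _ hx hy => rw [add_mul]; exact Submodule.add_mem _ hx hy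
  | smul r x _ hx => rw [smul_mul_assoc]; exact Submodule.smul_mem _ _ hx

def bigSet : Set (Rk k) := {q | ∃ (p : Rk k) (i : Fin k), q = p * Tg k i}

lemma Tg_mem_ideal (i : Fin k) : Tg k i ∈ rectIdeal k := by
  apply Ideal.subset_span
  exact ⟨(i : ℕ) + 1, ⟨by omega, by have := i.isLt; omega⟩, rfl⟩

lemma ideal_le_big {f : Rk k} (hf : f ∈ rectIdeal k) :
    f ∈ Submodule.span ℚ (bigSet k) := by
  have h0 : f ∈ Submodule.span (Rk k) (rectSchur k '' Set.Icc 1 k) := hf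
  obtain ⟨c, hsupp, rfl⟩ := Submodule.mem_span_set.mp h0
  rw [Finsupp.sum]
  apply Submodule.sum_mem
  intro g hg
  obtain ⟨ℓ, hℓ, rfl⟩ := hsupp hg
  rw [Set.mem_Icc] at hℓ
  have hlt : ℓ - 1 < k := by omega
  refine Submodule.subset_span ⟨c (rectSchur k ℓ), ⟨⟨ℓ - 1, hlt⟩, ?_⟩⟩
  rw [smul_eq_mul]
  congr 1
  rw [Tg]
  congr 1
  simp
  omega

lemma comp_ideal_mem {f : Rk k} (hf : f ∈ rectIdeal k) (e : ℕ) :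
    weightedHomogeneousComponent (wf k) e f ∈ M'd k e := by
  have hbig := ideal_le_big k hf
  clear hf
  induction hbig using Submodule.span_induction with
  | mem x hx =>
    obtain ⟨p, i, rfl⟩ := hx
    rw [MvPolynomial.as_sum p, Finset.sum_mul, map_sum]
    apply Submodule.sum_mem
    intro v hv
    have hmono : mono k (⇑v) = monomial v 1 := by
      rw [mono, Finsupp.equivFunOnFinite_symm_coe]
    have h2 : monomial v (coeff v p) = (coeff v p) • mono k (⇑v) := by
      rw [hmono, smul_monomial, smul_eq_mul, mul_one]
    rw [h2, smul_mul_assoc, map_smul]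
    apply Submodule.smul_mem
    have hhom : IsWeightedHomogeneous (wf k) (mono k (⇑v) * Tg k i)
        (wt k (⇑v) + dT k i) := (mono_homog k _).mul (Tg_homog k i)
    by_cases he : e = wt k (⇑v) + dT k i
    · subst he
      rw [IsWeightedHomogeneous.weightedHomogeneousComponent_same hhom]
      exact Md_mulT_red k i (mono_mem_Md k _ _ rfl)
    · rw [hhom.weightedHomogeneousComponent_ne _ he]
      exact Submodule.zero_mem _
  | zero => rw [map_zero]; exact Submodule.zero_mem _
  | add x y _ _ hx hy => rw [map_add]; exact Submodule.add_mem _ hx hy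
  | smul r x _ hx => rw [map_smul]; exact Submodule.smul_mem _ _ hx

lemma M'd_eq_inf (d : ℕ) :
    M'd k d = (Submodule.restrictScalars ℚ (rectIdeal k))
      ⊓ weightedHomogeneousSubmodule ℚ (wf k) d := by
  apply le_antisymm
  · refine le_inf ?_ (M'd_le_W k d)
    rw [M'd, Submodule.span_le]
    rintro p ⟨a, ⟨-, ⟨i, hi⟩⟩, rfl⟩
    have hik : (i : ℕ) < k := i.isLt
    set b : Fin k → ℕ := fun j => if j = i then a j - (k - (i : ℕ)) else a j with hb
    have hab : a = b + rectv k i := by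
      funext j
      by_cases hj : j = i
      · subst hj; simp [hb, rectv, sing]; omega
      · simp [hb, rectv, sing, hj]
    rw [hab, ← Psi_mulT]
    exact Ideal.mul_mem_left _ _ (Tg_mem_ideal k i)
  · rintro f ⟨hfI, hfW⟩
    have h1 := comp_ideal_mem k hfI d
    rwa [IsWeightedHomogeneous.weightedHomogeneousComponent_same hfW] at h1


lemma wt_coord_le {d : ℕ} {a : Fin k → ℕ} (h : wt k a = d) (j : Fin k) : a j ≤ d := by
  have h1 : a j * ((j : ℕ) + 1) ≤ wt k a :=
    Finset.single_le_sum (f := fun j : Fin k => a j * ((j : ℕ) + 1))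
      (fun _ _ => Nat.zero_le _) (Finset.mem_univ j)
  rw [h] at h1
  calc a j = a j * 1 := (mul_one _).symm
  _ ≤ a j * ((j : ℕ) + 1) := Nat.mul_le_mul_left _ (by omega)
  _ ≤ d := h1

abbrev idx (d : ℕ) : Type := {a : Fin k → ℕ // wt k a = d}

abbrev idxR (d : ℕ) : Type :=
  {a : Fin k → ℕ // wt k a = d ∧ ∃ i : Fin k, k - (i : ℕ) ≤ a i}

noncomputable def encIdx (d : ℕ) (a : idx k d) : Fin k → Fin (d + 1) :=
  fun j => ⟨a.1 j, by have := wt_coord_le k a.2 j; omega⟩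

lemma encIdx_inj (d : ℕ) : Function.Injective (encIdx k d) := by
  intro a b hab
  apply Subtype.ext
  funext j
  have := congrFun hab j
  simpa [encIdx, Fin.ext_iff] using this

noncomputable instance (d : ℕ) : Fintype (idx k d) :=
  Fintype.ofInjective (encIdx k d) (encIdx_inj k d)

def rToI (d : ℕ) (a : idxR k d) : idx k d := ⟨a.1, a.2.1⟩

lemma rToI_inj (d : ℕ) : Function.Injective (rToI k d) := by
  intro a b hab
  have h1 : (rToI k d a).1 = (rToI k d b).1 := congrArg Subtype.val hab
  exact Subtype.ext h1

noncomputable instance (d : ℕ) : Fintype (idxR k d) :=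
  Fintype.ofInjective (rToI k d) (rToI_inj k d)

lemma famS_indep (d : ℕ) : LinearIndependent ℚ (fun a : idx k d => mono k a.1) := by
  have hb := (MvPolynomial.basisMonomials (Fin k) ℚ).linearIndependent
  have hinj : Function.Injective
      (fun a : idx k d => Finsupp.equivFunOnFinite.symm a.1) := by
    intro a b hab
    exact Subtype.ext (Finsupp.equivFunOnFinite.symm.injective hab)
  have h := hb.comp _ hinj
  have he : (fun a : idx k d => mono k a.1)
      = (⇑(MvPolynomial.basisMonomials (Fin k) ℚ)
          ∘ fun a : idx k d => Finsupp.equivFunOnFinite.symm a.1) := by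
    funext a
    simp only [Function.comp_apply, MvPolynomial.coe_basisMonomials]
    rfl
  rw [he]
  exact h

lemma W_eq_Md (d : ℕ) : weightedHomogeneousSubmodule ℚ (wf k) d = Md k d :=
  le_antisymm (W_le_Md k d) (Md_le_W k d)

lemma famS_span (d : ℕ) :
    Submodule.span ℚ (Set.range (fun a : idx k d => mono k a.1))
      = weightedHomogeneousSubmodule ℚ (wf k) d := by
  apply le_antisymm
  · rw [Submodule.span_le]
    rintro p ⟨a, rfl⟩
    rw [SetLike.mem_coe, mem_weightedHomogeneousSubmodule]
    have h := mono_homog k a.1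
    rwa [a.2] at h
  · intro f hf
    rw [MvPolynomial.as_sum f]
    apply Submodule.sum_mem
    intro v hv
    have hwtv : wt k (⇑v) = d := by
      have h1 : Finsupp.weight (wf k) v = d := hf (mem_support_iff.mp hv)
      rw [← Finsupp.equivFunOnFinite_symm_coe v, weight_fsOf] at h1
      exact h1
    have hmono : mono k (⇑v) = monomial v 1 := by
      rw [mono, Finsupp.equivFunOnFinite_symm_coe]
    have h2 : monomial v (coeff v f) = (coeff v f) • mono k (⇑v) := by
      rw [hmono, smul_monomial, smul_eq_mul, mul_one]
    rw [h2]
    exact Submodule.smul_mem _ _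
      (Submodule.subset_span ⟨(⟨⇑v, hwtv⟩ : idx k d), rfl⟩)

lemma finrank_W (d : ℕ) :
    Module.finrank ℚ (weightedHomogeneousSubmodule ℚ (wf k) d)
      = Fintype.card (idx k d) := by
  rw [← famS_span k d]
  exact finrank_span_eq_card (famS_indep k d)

lemma finiteDimensional_W (d : ℕ) :
    FiniteDimensional ℚ (weightedHomogeneousSubmodule ℚ (wf k) d) := by
  rw [← famS_span k d]
  exact FiniteDimensional.span_of_finite ℚ (Set.finite_range _)

lemma famP_indep (d : ℕ) : LinearIndependent ℚ (fun a : idx k d => Psi k a.1) := by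
  set W := weightedHomogeneousSubmodule ℚ (wf k) d with hW
  have := finiteDimensional_W k d
  set famP : idx k d → W := fun a => ⟨Psi k a.1, by
    rw [hW, mem_weightedHomogeneousSubmodule]
    have h := Psi_homog k a.1
    rwa [a.2] at h⟩ with hfamP
  have hspan : Submodule.span ℚ (Set.range famP) = ⊤ := by
    apply Submodule.map_injective_of_injective (Submodule.injective_subtype W)
    rw [Submodule.map_span, Submodule.map_top, Submodule.range_subtype]
    have himg : W.subtype '' (Set.range famP) = PsiSet k d := by
      ext q
      constructor
      · rintro ⟨x, ⟨a, rfl⟩, rfl⟩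
        exact ⟨a.1, a.2, rfl⟩
      · rintro ⟨a, ha, rfl⟩
        exact ⟨famP ⟨a, ha⟩, ⟨⟨a, ha⟩, rfl⟩, rfl⟩
    rw [himg]
    rw [show Submodule.span ℚ (PsiSet k d) = Md k d from rfl, ← W_eq_Md k d]
  have hcard : Fintype.card (idx k d) = Module.finrank ℚ W := (finrank_W k d).symm
  have h := linearIndependent_of_top_le_span_of_card_eq_finrank (le_of_eq hspan.symm) hcard
  have h2 := h.map' W.subtype (Submodule.ker_subtype W)
  exact h2

lemma famR_indep (d : ℕ) : LinearIndependent ℚ (fun a : idxR k d => Psi k a.1) := by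
  have h := (famP_indep k d).comp (rToI k d) (rToI_inj k d)
  exact h

lemma famR_span (d : ℕ) :
    Submodule.span ℚ (Set.range (fun a : idxR k d => Psi k a.1)) = M'd k d := by
  congr 1
  ext q
  constructor
  · rintro ⟨a, rfl⟩
    exact ⟨a.1, a.2, rfl⟩
  · rintro ⟨a, ha, rfl⟩
    exact ⟨⟨a, ha⟩, rfl⟩

lemma finrank_M'd (d : ℕ) :
    Module.finrank ℚ (M'd k d) = Fintype.card (idxR k d) := by
  rw [← famR_span k d]
  exact finrank_span_eq_card (famR_indep k d)

lemma finrank_piece (d : ℕ) :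
    Module.finrank ℚ
      (Submodule.map (Ideal.Quotient.mkₐ ℚ (rectIdeal k)).toLinearMap
        (weightedHomogeneousSubmodule ℚ (wf k) d))
      = Fintype.card (idx k d) - Fintype.card (idxR k d) := by
  classical
  set W := weightedHomogeneousSubmodule ℚ (wf k) d with hW
  have hfin := finiteDimensional_W k d
  set π := (Ideal.Quotient.mkₐ ℚ (rectIdeal k)).toLinearMap with hπ
  set f := π.comp W.subtype with hf
  have hrange : LinearMap.range f = Submodule.map π W := by
    rw [hf, LinearMap.range_comp, Submodule.range_subtype]
  have hkerπ : LinearMap.ker π = Submodule.restrictScalars ℚ (rectIdeal k) := by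
    ext x
    simp only [LinearMap.mem_ker, Submodule.restrictScalars_mem, hπ,
      AlgHom.toLinearMap_apply, Ideal.Quotient.mkₐ_eq_mk]
    exact Ideal.Quotient.eq_zero_iff_mem
  have hker : LinearMap.ker f = Submodule.comap W.subtype (M'd k d) := by
    rw [hf, LinearMap.ker_comp, hkerπ]
    ext x
    simp only [Submodule.mem_comap, Submodule.restrictScalars_mem, M'd_eq_inf,
      Submodule.mem_inf]
    exact ⟨fun h => ⟨h, x.2⟩, fun h => h.1⟩
  have hle : M'd k d ≤ W := by rw [M'd_eq_inf]; exact inf_le_right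
  have hkerrank : Module.finrank ℚ (LinearMap.ker f) = Fintype.card (idxR k d) := by
    rw [hker, ← finrank_M'd k d]
    exact (Submodule.comapSubtypeEquivOfLe hle).finrank_eq
  have hrn := LinearMap.finrank_range_add_finrank_ker f
  rw [hrange, hkerrank, finrank_W k d] at hrn
  omega


abbrev idxI (d : ℕ) : Type :=
  {a : Fin k → ℕ // wt k a = d ∧ ¬ ∃ i : Fin k, k - (i : ℕ) ≤ a i}

def iToI (d : ℕ) (a : idxI k d) : idx k d := ⟨a.1, a.2.1⟩

lemma iToI_inj (d : ℕ) : Function.Injective (iToI k d) := by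
  intro a b hab
  have h1 : (iToI k d a).1 = (iToI k d b).1 := congrArg Subtype.val hab
  exact Subtype.ext h1

noncomputable instance (d : ℕ) : Fintype (idxI k d) :=
  Fintype.ofInjective (iToI k d) (iToI_inj k d)

lemma card_split (d : ℕ) :
    Fintype.card (idxI k d)
      = Fintype.card (idx k d) - Fintype.card (idxR k d) := by
  classical
  have e1 : idxR k d ≃ {x : idx k d // ∃ i : Fin k, k - (i : ℕ) ≤ x.1 i} :=
    (Equiv.subtypeSubtypeEquivSubtypeInter
      (fun a : Fin k → ℕ => wt k a = d)
      (fun a : Fin k → ℕ => ∃ i : Fin k, k - (i : ℕ) ≤ a i)).symm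
  have e2 : idxI k d ≃ {x : idx k d // ¬ ∃ i : Fin k, k - (i : ℕ) ≤ x.1 i} :=
    (Equiv.subtypeSubtypeEquivSubtypeInter
      (fun a : Fin k → ℕ => wt k a = d)
      (fun a : Fin k → ℕ => ¬ ∃ i : Fin k, k - (i : ℕ) ≤ a i)).symm
  rw [Fintype.card_congr e2, Fintype.card_congr e1,
    Fintype.card_subtype_compl]


lemma rankGenPoly_eq (hk : 0 < k) :
    rankGenPoly k = ∏ i : Fin k, ∑ j ∈ Finset.range (k - (i : ℕ)),
        (Polynomial.X : Polynomial ℕ) ^ (j * ((i : ℕ) + 1)) := by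
  have h1 : (∏ i : Fin k, ∑ j ∈ Finset.range (k - (i : ℕ)),
        (Polynomial.X : Polynomial ℕ) ^ (j * ((i : ℕ) + 1)))
      = ∏ i ∈ Finset.range k, ∑ j ∈ Finset.range (k - i),
        (Polynomial.X : Polynomial ℕ) ^ (j * (i + 1)) :=
    Fin.prod_univ_eq_prod_range
      (fun n => ∑ j ∈ Finset.range (k - n), (Polynomial.X : Polynomial ℕ) ^ (j * (n + 1))) k
  rw [h1]
  have h2 : ∀ i ∈ Finset.range k,
      (∑ j ∈ Finset.range (k - i), (Polynomial.X : Polynomial ℕ) ^ (j * (i + 1)))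
      = ∑ j ∈ Finset.range (k - (i + 1) + 1),
        (Polynomial.X : Polynomial ℕ) ^ (j * (i + 1)) := by
    intro i hi
    rw [Finset.mem_range] at hi
    congr 2
    omega
  rw [Finset.prod_congr rfl h2]
  have h3 : (∏ i ∈ Finset.range k, ∑ j ∈ Finset.range (k - (i + 1) + 1),
        (Polynomial.X : Polynomial ℕ) ^ (j * (i + 1)))
      = ∏ ℓ ∈ Finset.Icc 1 k, ∑ j ∈ Finset.range (k - ℓ + 1),
        (Polynomial.X : Polynomial ℕ) ^ (j * ℓ) := by
    rw [← Finset.Ico_add_one_right_eq_Icc, Finset.prod_Ico_eq_prod_range]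
    apply Finset.prod_congr rfl
    intro i _
    rw [Nat.add_comm 1 i]
  rw [h3]
  have h5 : Finset.Icc 1 k = Finset.Icc 1 ((k - 1) + 1) := by
    rw [Nat.sub_add_cancel hk]
  rw [h5, Finset.prod_Icc_succ_top (by omega)]
  have h6 : (∑ j ∈ Finset.range (k - ((k - 1) + 1) + 1),
      (Polynomial.X : Polynomial ℕ) ^ (j * ((k - 1) + 1))) = 1 := by
    have : k - ((k - 1) + 1) + 1 = 1 := by omega
    rw [this, Finset.sum_range_one, Nat.zero_mul, pow_zero]
  rw [h6, mul_one, rankGenPoly]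

lemma coeff_eq_card (hk : 0 < k) (d : ℕ) :
    (rankGenPoly k).coeff d = Fintype.card (idxI k d) := by
  classical
  rw [rankGenPoly_eq k hk, Finset.prod_sum, Polynomial.finset_sum_coeff]
  have hterm : ∀ p ∈ (Finset.univ : Finset (Fin k)).pi
      (fun i => Finset.range (k - (i : ℕ))),
      (∏ x ∈ Finset.univ.attach,
        (Polynomial.X : Polynomial ℕ) ^ (p x.1 x.2 * ((x.1 : ℕ) + 1))).coeff d
      = if d = (∑ x ∈ Finset.univ.attach, p x.1 x.2 * ((x.1 : ℕ) + 1)) then 1 else 0 := by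
    intro p _
    rw [Finset.prod_pow_eq_pow_sum, Polynomial.coeff_X_pow]
  rw [Finset.sum_congr rfl hterm, ← Finset.card_filter, ← Finset.card_univ]
  refine Finset.card_bij'
    (fun p hp => (⟨fun i => p i (Finset.mem_univ i), ?_⟩ : idxI k d))
    (fun a _ => fun i _ => a.1 i) ?_ ?_ ?_ ?_
  · -- the subtype property
    have hp' := Finset.mem_filter.mp hp
    constructor
    · rw [wt, ← Finset.sum_attach Finset.univ
        (fun i : Fin k => p i (Finset.mem_univ i) * ((i : ℕ) + 1))]
      exact hp'.2.symm
    · rintro ⟨i, hi⟩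
      have hi' : k - (i : ℕ) ≤ p i (Finset.mem_univ i) := hi
      have h2 := Finset.mem_pi.mp hp'.1 i (Finset.mem_univ i)
      rw [Finset.mem_range] at h2
      omega
  · intro p hp
    exact Finset.mem_univ _
  · intro a _
    rw [Finset.mem_filter]
    refine ⟨?_, ?_⟩
    · rw [Finset.mem_pi]
      intro i _
      rw [Finset.mem_range]
      have h2 := a.2.2
      push_neg at h2
      exact h2 i
    · have hs : (∑ x ∈ Finset.univ.attach, a.1 x.1 * ((x.1 : ℕ) + 1)) = wt k a.1 := by
        rw [wt, Finset.sum_attach Finset.univ (fun i : Fin k => a.1 i * ((i : ℕ) + 1))]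
      rw [hs, a.2.1]
  · intro p hp
    funext i hi
    rfl
  · intro a ha
    apply Subtype.ext
    funext i
    rfl

end HSQ

/-- Grade `R = ℚ[h_1, …, h_k]` by giving `h_i` degree `i` (the
variable `X i` gets weight `i + 1`).  Since `I_k` is homogeneous, the degree-`d`
component of `R/I_k` is the image of the degree-`d` weighted-homogeneous
component of `R` under the quotient map.  Its `ℚ`-dimension equals the
coefficient of `q^d` in `∏_{i=1}^{k-1} (1 + q^i + ⋯ + q^{(k-i)i})`. -/
theorem hilbert_series_quotient (k : ℕ) (hk : 0 < k) (d : ℕ) :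
    Module.finrank ℚ
      (Submodule.map (Ideal.Quotient.mkₐ ℚ (rectIdeal k)).toLinearMap
        (MvPolynomial.weightedHomogeneousSubmodule ℚ
          (fun i : Fin k => (i : ℕ) + 1) d)) =
      (rankGenPoly k).coeff d := by
  have h1 := HSQ.finrank_piece k d
  have h2 := HSQ.card_split k d
  have h3 := HSQ.coeff_eq_card k hk d
  have hwf : (fun i : Fin k => (i : ℕ) + 1) = HSQ.wf k := rfl
  rw [hwf, h1, h3, h2]
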